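/- Let β > 0 and let X be a random variable in a separable metric space 𝒳. Then the following are equivalent: (i) E[ĥ_X²] < ∞; (ii) ĥ_X is integrable and E[t̃_X²] < ∞, where t̃_X := E(ĥ_X | X₁,X₂). Furthermore, if these hold, then (1/4)·E[ĥ_X²] = E[t̃_X²], i.e. hDC_β(X,X) = tDC_β(X,X). -/

import Mathlib

open MeasureTheory ProbabilityTheory

noncomputable section

/-- `ĥ_X := d(X₁,X₂)^β − d(X₂,X₃)^β + d(X₃,X₄)^β − d(X₄,X₁)^β`, built from four
(independent) copies `X 0, X 1, X 2, X 3` of a random variable. -/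
def hHat (β : ℝ) {Ω 𝒳 : Type*} [MetricSpace 𝒳] (X : Fin 4 → Ω → 𝒳) (ω : Ω) : ℝ :=
  dist (X 0 ω) (X 1 ω) ^ β - dist (X 1 ω) (X 2 ω) ^ β
    + dist (X 2 ω) (X 3 ω) ^ β - dist (X 3 ω) (X 0 ω) ^ β

/-- `t̃_X := E(ĥ_X | X₁, X₂)`, the conditional expectation of `ĥ_X` given the σ-algebra
generated by `(X₁, X₂)`. -/
def tTilde (β : ℝ) {Ω 𝒳 : Type*} [MetricSpace 𝒳] [MeasurableSpace 𝒳]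
    {mΩ : MeasurableSpace Ω} (μ : Measure Ω) (X : Fin 4 → Ω → 𝒳) : Ω → ℝ :=
  μ[hHat β X | MeasurableSpace.comap (fun ω => (X 0 ω, X 1 ω)) inferInstance]

set_option linter.unusedSectionVars false

namespace Stmt18Aux

variable {𝒳 : Type*} [MetricSpace 𝒳] [MeasurableSpace 𝒳] [BorelSpace 𝒳] [SecondCountableTopology 𝒳] {β : ℝ}

/-- The 4-point kernel. -/
def Hf (β : ℝ) (p q : 𝒳 × 𝒳) : ℝ :=
  dist p.1 p.2 ^ β - dist p.2 q.1 ^ β + dist q.1 q.2 ^ β - dist q.2 p.1 ^ β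

lemma continuous_Hf (hβ : 0 ≤ β) :
    Continuous (fun pq : (𝒳 × 𝒳) × (𝒳 × 𝒳) => Hf β pq.1 pq.2) := by
  have hd : ∀ (f g : ((𝒳 × 𝒳) × (𝒳 × 𝒳)) → 𝒳), Continuous f → Continuous g →
      Continuous (fun y => dist (f y) (g y) ^ β) := fun f g hf hg =>
    (hf.dist hg).rpow_const (fun _ => Or.inr hβ)
  exact (((hd _ _ (continuous_fst.fst) (continuous_fst.snd)).sub
    (hd _ _ (continuous_fst.snd) (continuous_snd.fst))).add
    (hd _ _ (continuous_snd.fst) (continuous_snd.snd))).sub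
    (hd _ _ (continuous_snd.snd) (continuous_fst.fst))

lemma measurable_Hf (hβ : 0 ≤ β) :
    Measurable (fun pq : (𝒳 × 𝒳) × (𝒳 × 𝒳) => Hf β pq.1 pq.2) :=
  (continuous_Hf hβ).measurable

/-- averaged kernel -/
def phi (β : ℝ) (ν : Measure 𝒳) (p : 𝒳 × 𝒳) : ℝ := ∫ q, Hf β p q ∂(ν.prod ν)

/-- marginal of the averaged kernel -/
def psi (β : ℝ) (ν : Measure 𝒳) (v : 𝒳) : ℝ := ∫ u, phi β ν (u, v) ∂ν

lemma stronglyMeasurable_phi (hβ : 0 ≤ β) (ν : Measure 𝒳) [SFinite ν] :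
    StronglyMeasurable (phi β ν) :=
  (continuous_Hf hβ).stronglyMeasurable.integral_prod_right'

lemma stronglyMeasurable_psi (hβ : 0 ≤ β) (ν : Measure 𝒳) [SFinite ν] :
    StronglyMeasurable (psi β ν) :=
  (stronglyMeasurable_phi hβ ν).integral_prod_left'

lemma map_swap_prod_left {α 𝒴 : Type*} [MeasurableSpace α] [MeasurableSpace 𝒴]
    (ν : Measure α) [SFinite ν] (κ : Measure 𝒴) [SFinite κ] :
    ((ν.prod ν).prod κ).map (fun w : (α × α) × 𝒴 => (w.1.2, (w.1.1, w.2)))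
      = ν.prod (ν.prod κ) := by
  have h1 : (fun w : (α × α) × 𝒴 => (w.1.2, (w.1.1, w.2)))
      = (MeasurableEquiv.prodAssoc : (α × α) × 𝒴 ≃ᵐ α × α × 𝒴)
        ∘ (Prod.map Prod.swap id) := rfl
  rw [h1, ← Measure.map_map (MeasurableEquiv.prodAssoc).measurable
    (measurable_swap.prodMap measurable_id),
    ← Measure.map_prod_map _ _ measurable_swap measurable_id,
    Measure.prod_swap, Measure.map_id, Measure.prodAssoc_prod]

lemma map_transpose {α 𝒴 : Type*} [MeasurableSpace α] [MeasurableSpace 𝒴]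
    (ν : Measure α) [SFinite ν] (κ : Measure 𝒴) [SFinite κ] :
    (ν.prod (ν.prod κ)).map (fun w : α × α × 𝒴 => (w.2.1, (w.1, w.2.2)))
      = ν.prod (ν.prod κ) := by
  have h1 : (fun w : α × α × 𝒴 => (w.2.1, (w.1, w.2.2)))
      = (fun w : (α × α) × 𝒴 => (w.1.2, (w.1.1, w.2)))
        ∘ (MeasurableEquiv.prodAssoc.symm : α × α × 𝒴 ≃ᵐ (α × α) × 𝒴) := rfl
  have h2 : (ν.prod (ν.prod κ)).map (MeasurableEquiv.prodAssoc.symm :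
      α × α × 𝒴 ≃ᵐ (α × α) × 𝒴) = (ν.prod ν).prod κ := by
    rw [← Measure.prodAssoc_prod (μ := ν) (ν := ν) (τ := κ),
      MeasurableEquiv.map_symm_map]
  rw [h1, ← Measure.map_map (by fun_prop) (MeasurableEquiv.prodAssoc.symm).measurable,
    h2, map_swap_prod_left]


lemma measurable_Hf_comp {Y : Type*} [MeasurableSpace Y] (hβ : 0 ≤ β)
    {f g : Y → 𝒳 × 𝒳} (hf : Measurable f) (hg : Measurable g) :
    Measurable (fun y => Hf β (f y) (g y)) := by
  have h : (fun y => Hf β (f y) (g y))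
      = (fun pq : (𝒳 × 𝒳) × (𝒳 × 𝒳) => Hf β pq.1 pq.2) ∘ (fun y => (f y, g y)) := rfl
  rw [h]; exact (measurable_Hf hβ).comp (hf.prodMk hg)

section Core

variable {ν : Measure 𝒳} [IsProbabilityMeasure ν]

lemma psi_ae_zero (hβ : 0 ≤ β)
    (hInt : Integrable (fun pq : (𝒳 × 𝒳) × 𝒳 × 𝒳 => Hf β pq.1 pq.2)
      ((ν.prod ν).prod (ν.prod ν))) :
    ∀ᵐ v ∂ν, psi β ν v = 0 := by
  have hJm : Measurable (fun w : 𝒳 × 𝒳 × 𝒳 × 𝒳 => Hf β (w.2.1, w.1) w.2.2) :=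
    measurable_Hf_comp hβ (by fun_prop) (by fun_prop)
  have hJ : Integrable (fun w : 𝒳 × 𝒳 × 𝒳 × 𝒳 => Hf β (w.2.1, w.1) w.2.2)
      (ν.prod (ν.prod (ν.prod ν))) := by
    rw [← map_swap_prod_left ν (ν.prod ν)]
    rw [integrable_map_measure (by rw [map_swap_prod_left]; exact hJm.aestronglyMeasurable)
      (by fun_prop)]
    exact hInt
  have hae := hJ.prod_right_ae
  filter_upwards [hae] with v hKv
  have h1 : psi β ν v = ∫ w, Hf β (w.1, v) w.2 ∂(ν.prod (ν.prod ν)) :=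
    (integral_prod _ hKv).symm
  have hgm : Measurable (fun w : 𝒳 × 𝒳 × 𝒳 => Hf β (w.1, v) w.2) :=
    measurable_Hf_comp hβ (by fun_prop) (by fun_prop)
  have h2 : ∫ w, Hf β (w.1, v) w.2 ∂(ν.prod (ν.prod ν))
      = ∫ w : 𝒳 × 𝒳 × 𝒳, Hf β (w.2.1, v) (w.1, w.2.2) ∂(ν.prod (ν.prod ν)) := by
    conv_lhs => rw [← map_transpose ν ν]
    rw [integral_map (by fun_prop)
      (by rw [map_transpose]; exact hgm.aestronglyMeasurable)]
  have h3 : ∀ w : 𝒳 × 𝒳 × 𝒳, Hf β (w.2.1, v) (w.1, w.2.2) = - Hf β (w.1, v) w.2 := by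
    intro w; simp only [Hf]
    rw [dist_comm w.2.1 v, dist_comm w.1 w.2.2, dist_comm v w.1, dist_comm w.2.2 w.2.1]
    ring
  have h4 : ∫ w : 𝒳 × 𝒳 × 𝒳, Hf β (w.2.1, v) (w.1, w.2.2) ∂(ν.prod (ν.prod ν))
      = - ∫ w, Hf β (w.1, v) w.2 ∂(ν.prod (ν.prod ν)) := by
    simp_rw [h3]; exact integral_neg _
  rw [h1]
  have := h2.trans h4
  linarith [this]

lemma integrable_mul_of_memL2 {α : Type*} {mα : MeasurableSpace α} {μ : Measure α} {f g : α → ℝ}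
    (hf : MemLp f 2 μ) (hg : MemLp g 2 μ) : Integrable (fun x => f x * g x) μ := by
  have h1 : Integrable (fun x => f x ^ 2) μ := (memLp_two_iff_integrable_sq hf.1).1 hf
  have h2 : Integrable (fun x => g x ^ 2) μ := (memLp_two_iff_integrable_sq hg.1).1 hg
  refine Integrable.mono' ((h1.add h2).div_const 2) (hf.1.mul hg.1) (ae_of_all _ fun x => ?_)
  simp only [Real.norm_eq_abs, Pi.add_apply, abs_mul]
  nlinarith [sq_nonneg (|f x| - |g x|), sq_abs (f x), sq_abs (g x), abs_nonneg (f x),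
    abs_nonneg (g x)]

lemma key_identity (hβ : 0 ≤ β)
    (hInt : Integrable (fun pq : (𝒳 × 𝒳) × 𝒳 × 𝒳 => Hf β pq.1 pq.2)
      ((ν.prod ν).prod (ν.prod ν))) :
    ∀ᵐ pq ∂((ν.prod ν).prod (ν.prod ν)),
      Hf β pq.1 pq.2 = phi β ν pq.1 - phi β ν (pq.1.2, pq.2.1) + phi β ν pq.2
        - phi β ν (pq.2.2, pq.1.1) := by
  have hSmeas : MeasurableSet {r : 𝒳 × 𝒳 | Integrable (fun q => Hf β r q) (ν.prod ν)} := by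
    have he : {r : 𝒳 × 𝒳 | Integrable (fun q => Hf β r q) (ν.prod ν)}
        = {r : 𝒳 × 𝒳 | (∫⁻ q, ‖Hf β r q‖₊ ∂(ν.prod ν)) < ⊤} := by
      ext r
      simp only [Set.mem_setOf_eq]
      constructor
      · exact fun h => h.hasFiniteIntegral
      · intro h
        exact ⟨(measurable_Hf_comp hβ measurable_const measurable_id).aestronglyMeasurable, h⟩
    rw [he]
    exact measurableSet_lt (Measurable.lintegral_prod_right'
      ((measurable_Hf hβ).nnnorm.coe_nnreal_ennreal)) measurable_const
  have hae : ∀ᵐ r ∂(ν.prod ν), Integrable (fun q => Hf β r q) (ν.prod ν) :=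
    hInt.prod_right_ae
  have hfst : ((ν.prod ν).prod (ν.prod ν)).map Prod.fst = ν.prod ν := by
    rw [Measure.map_fst_prod]; simp
  have hsnd : ((ν.prod ν).prod (ν.prod ν)).map Prod.snd = ν.prod ν := by
    rw [Measure.map_snd_prod]; simp
  have hm3 : ((ν.prod ν).prod (ν.prod ν)).map
      (fun x : (𝒳 × 𝒳) × 𝒳 × 𝒳 => (x.1.2, x.2.1)) = ν.prod ν := by
    have h : (fun x : (𝒳 × 𝒳) × 𝒳 × 𝒳 => (x.1.2, x.2.1))
        = Prod.map (Prod.snd : 𝒳 × 𝒳 → 𝒳) (Prod.fst : 𝒳 × 𝒳 → 𝒳) := rfl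
    rw [h, ← Measure.map_prod_map _ _ measurable_snd measurable_fst,
      Measure.map_snd_prod, Measure.map_fst_prod]
    simp
  have hm4 : ((ν.prod ν).prod (ν.prod ν)).map
      (fun x : (𝒳 × 𝒳) × 𝒳 × 𝒳 => (x.2.2, x.1.1)) = ν.prod ν := by
    have h : (fun x : (𝒳 × 𝒳) × 𝒳 × 𝒳 => (x.2.2, x.1.1))
        = (Prod.map (Prod.snd : 𝒳 × 𝒳 → 𝒳) (Prod.fst : 𝒳 × 𝒳 → 𝒳)) ∘ Prod.swap := rfl
    rw [h, ← Measure.map_map (measurable_snd.prodMap measurable_fst) measurable_swap,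
      Measure.prod_swap, ← Measure.map_prod_map _ _ measurable_snd measurable_fst,
      Measure.map_snd_prod, Measure.map_fst_prod]
    simp
  have h1 : ∀ᵐ x ∂((ν.prod ν).prod (ν.prod ν)),
      Integrable (fun q => Hf β x.1 q) (ν.prod ν) := by
    refine (ae_map_iff measurable_fst.aemeasurable hSmeas).1 ?_
    rw [hfst]; exact hae
  have h2 : ∀ᵐ x ∂((ν.prod ν).prod (ν.prod ν)),
      Integrable (fun q => Hf β x.2 q) (ν.prod ν) := by
    refine (ae_map_iff measurable_snd.aemeasurable hSmeas).1 ?_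
    rw [hsnd]; exact hae
  have h3 : ∀ᵐ x ∂((ν.prod ν).prod (ν.prod ν)),
      Integrable (fun q => Hf β (x.1.2, x.2.1) q) (ν.prod ν) := by
    refine (ae_map_iff (by fun_prop) hSmeas).1 ?_
    rw [hm3]; exact hae
  have h4 : ∀ᵐ x ∂((ν.prod ν).prod (ν.prod ν)),
      Integrable (fun q => Hf β (x.2.2, x.1.1) q) (ν.prod ν) := by
    refine (ae_map_iff (by fun_prop) hSmeas).1 ?_
    rw [hm4]; exact hae
  filter_upwards [h1, h2, h3, h4] with x hx1 hx2 hx3 hx4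
  have hsum : ∫ y, (Hf β x.1 y - Hf β (x.1.2, x.2.1) y + Hf β x.2 y
          - Hf β (x.2.2, x.1.1) y) ∂(ν.prod ν)
      = phi β ν x.1 - phi β ν (x.1.2, x.2.1) + phi β ν x.2 - phi β ν (x.2.2, x.1.1) := by
    have i1 : Integrable (fun y : 𝒳 × 𝒳 => Hf β x.1 y - Hf β (x.1.2, x.2.1) y) (ν.prod ν) :=
      hx1.sub hx3
    have i2 : Integrable (fun y : 𝒳 × 𝒳 => Hf β x.1 y - Hf β (x.1.2, x.2.1) y + Hf β x.2 y)
        (ν.prod ν) := i1.add hx2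
    rw [integral_sub i2 hx4, integral_add i1 hx2, integral_sub hx1 hx3]
    rfl
  set A : 𝒳 → ℝ := fun t =>
    dist x.1.1 t ^ β - dist x.1.2 t ^ β + dist x.2.1 t ^ β - dist x.2.2 t ^ β with hA
  have hpt : ∀ y : 𝒳 × 𝒳, Hf β x.1 y - Hf β (x.1.2, x.2.1) y + Hf β x.2 y
      - Hf β (x.2.2, x.1.1) y = Hf β x.1 x.2 + (A y.1 - A y.2) := by
    intro y
    simp only [Hf, hA]
    rw [dist_comm y.2 x.1.1, dist_comm y.2 x.1.2, dist_comm y.2 x.2.1, dist_comm y.2 x.2.2,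
      dist_comm x.1.2 y.1, dist_comm x.2.1 y.1, dist_comm x.2.2 y.1]
    ring
  have hAcont : Continuous A := by
    have hd : ∀ c : 𝒳, Continuous (fun t : 𝒳 => dist c t ^ β) := fun c =>
      (continuous_const.dist continuous_id).rpow_const (fun _ => Or.inr hβ)
    exact (((hd _).sub (hd _)).add (hd _)).sub (hd _)
  have hGm : Measurable (fun y : 𝒳 × 𝒳 => A y.1 - A y.2) := by fun_prop
  have hGint : Integrable (fun y : 𝒳 × 𝒳 => A y.1 - A y.2) (ν.prod ν) := by
    have hs : Integrable (fun y => (Hf β x.1 y - Hf β (x.1.2, x.2.1) y + Hf β x.2 y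
        - Hf β (x.2.2, x.1.1) y) - Hf β x.1 x.2) (ν.prod ν) :=
      ((((hx1.sub hx3).congr (ae_of_all _ fun y => rfl)).add hx2).sub hx4).sub
        (integrable_const _)
    exact hs.congr (ae_of_all _ fun y => by beta_reduce; rw [hpt y]; ring)
  have hG0 : ∫ y : 𝒳 × 𝒳, (A y.1 - A y.2) ∂(ν.prod ν) = 0 := by
    have hswap : ∫ y : 𝒳 × 𝒳, (A y.1 - A y.2) ∂(ν.prod ν)
        = ∫ y : 𝒳 × 𝒳, (A y.2 - A y.1) ∂(ν.prod ν) := by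
      conv_lhs => rw [← Measure.prod_swap]
      rw [integral_map measurable_swap.aemeasurable
        (by rw [Measure.prod_swap]; exact hGm.aestronglyMeasurable)]
      simp only [Prod.fst_swap, Prod.snd_swap]
    have hneg : ∫ y : 𝒳 × 𝒳, (A y.2 - A y.1) ∂(ν.prod ν)
        = - ∫ y : 𝒳 × 𝒳, (A y.1 - A y.2) ∂(ν.prod ν) := by
      rw [← integral_neg]; congr 1; funext y; ring
    linarith [hswap.trans hneg]
  rw [← hsum, integral_congr_ae (ae_of_all _ hpt), integral_add (integrable_const _) hGint,
    integral_const, hG0]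
  simp

lemma memL2_phi (hβ : 0 ≤ β)
    (h2 : MemLp (fun pq : (𝒳 × 𝒳) × 𝒳 × 𝒳 => Hf β pq.1 pq.2) 2
      ((ν.prod ν).prod (ν.prod ν))) :
    MemLp (phi β ν) 2 (ν.prod ν) := by
  have hasm : AEStronglyMeasurable (fun pq : (𝒳 × 𝒳) × 𝒳 × 𝒳 => Hf β pq.1 pq.2)
      ((ν.prod ν).prod (ν.prod ν)) := (measurable_Hf hβ).aestronglyMeasurable
  have hsq : Integrable (fun pq : (𝒳 × 𝒳) × 𝒳 × 𝒳 => Hf β pq.1 pq.2 ^ 2)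
      ((ν.prod ν).prod (ν.prod ν)) := (memLp_two_iff_integrable_sq hasm).1 h2
  have hg : Integrable (fun p : 𝒳 × 𝒳 => ∫ q, Hf β p q ^ 2 ∂(ν.prod ν)) (ν.prod ν) :=
    hsq.integral_prod_left
  have hae : ∀ᵐ p ∂(ν.prod ν), Integrable (fun q => Hf β p q ^ 2) (ν.prod ν) :=
    hsq.prod_right_ae
  have hb : ∀ᵐ p ∂(ν.prod ν), ‖phi β ν p ^ 2‖ ≤ ∫ q, Hf β p q ^ 2 ∂(ν.prod ν) := by
    filter_upwards [hae] with p hp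
    have hslm : AEStronglyMeasurable (fun q => Hf β p q) (ν.prod ν) :=
      (measurable_Hf_comp hβ measurable_const measurable_id).aestronglyMeasurable
    have hmem : MemLp (fun q => Hf β p q) 2 (ν.prod ν) :=
      (memLp_two_iff_integrable_sq hslm).2 hp
    have hv := variance_nonneg (fun q => Hf β p q) (ν.prod ν)
    rw [variance_eq_sub hmem] at hv
    simp only [Pi.pow_apply] at hv
    rw [Real.norm_eq_abs, abs_of_nonneg (sq_nonneg _)]
    have hphi : phi β ν p = ∫ q, Hf β p q ∂(ν.prod ν) := rfl
    rw [hphi]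
    linarith
  have hphiasm : AEStronglyMeasurable (phi β ν) (ν.prod ν) :=
    (stronglyMeasurable_phi hβ ν).aestronglyMeasurable
  refine (memLp_two_iff_integrable_sq hphiasm).2 (Integrable.mono' hg ?_ hb)
  exact ((stronglyMeasurable_phi hβ ν).measurable.pow_const 2).aestronglyMeasurable

lemma psi_measurableSet_zero (hβ : 0 ≤ β) :
    MeasurableSet {v : 𝒳 | psi β ν v = 0} :=
  (stronglyMeasurable_psi hβ ν).measurable (measurableSet_singleton (0 : ℝ))

lemma integral_phi_zero (hβ : 0 ≤ β) (hInt : Integrable (phi β ν) (ν.prod ν))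
    (hψ : ∀ᵐ v ∂ν, psi β ν v = 0) :
    ∫ p, phi β ν p ∂(ν.prod ν) = 0 := by
  rw [integral_prod_symm _ hInt]
  refine integral_eq_zero_of_ae ?_
  filter_upwards [hψ] with v hv
  simpa [psi] using hv

lemma integral_phi_adj (hβ : 0 ≤ β) (hφ2 : MemLp (phi β ν) 2 (ν.prod ν))
    (hψ : ∀ᵐ v ∂ν, psi β ν v = 0) :
    ∫ x : 𝒳 × 𝒳 × 𝒳, phi β ν (x.1, x.2.1) * phi β ν x.2 ∂(ν.prod (ν.prod ν)) = 0 := by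
  have hm1 : (ν.prod (ν.prod ν)).map (fun x : 𝒳 × 𝒳 × 𝒳 => (x.1, x.2.1)) = ν.prod ν := by
    have h : (fun x : 𝒳 × 𝒳 × 𝒳 => (x.1, x.2.1))
        = Prod.map (id : 𝒳 → 𝒳) (Prod.fst : 𝒳 × 𝒳 → 𝒳) := rfl
    rw [h, ← Measure.map_prod_map _ _ measurable_id measurable_fst,
      Measure.map_id, Measure.map_fst_prod]
    simp
  have hm2 : (ν.prod (ν.prod ν)).map (Prod.snd : 𝒳 × (𝒳 × 𝒳) → 𝒳 × 𝒳) = ν.prod ν := by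
    rw [Measure.map_snd_prod]; simp
  have hφasm : AEStronglyMeasurable (phi β ν) (ν.prod ν) :=
    (stronglyMeasurable_phi hβ ν).aestronglyMeasurable
  have hg1 : MemLp (fun x : 𝒳 × 𝒳 × 𝒳 => phi β ν (x.1, x.2.1)) 2 (ν.prod (ν.prod ν)) := by
    have := (memLp_map_measure_iff (by rw [hm1]; exact hφasm) (by fun_prop)).1
      (by rw [hm1]; exact hφ2)
    exact this
  have hg2 : MemLp (fun x : 𝒳 × 𝒳 × 𝒳 => phi β ν x.2) 2 (ν.prod (ν.prod ν)) := by
    have := (memLp_map_measure_iff (by rw [hm2]; exact hφasm) (by fun_prop)).1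
      (by rw [hm2]; exact hφ2)
    exact this
  have hint : Integrable (fun x : 𝒳 × 𝒳 × 𝒳 => phi β ν (x.1, x.2.1) * phi β ν x.2)
      (ν.prod (ν.prod ν)) := integrable_mul_of_memL2 hg1 hg2
  rw [integral_prod_symm _ hint]
  have hψ' : ∀ᵐ y ∂(ν.prod ν), psi β ν y.1 = 0 := by
    refine (ae_map_iff measurable_fst.aemeasurable (psi_measurableSet_zero hβ)).1 ?_
    rw [show Measure.map Prod.fst (ν.prod ν) = ν by rw [Measure.map_fst_prod]; simp]
    exact hψ
  refine integral_eq_zero_of_ae ?_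
  filter_upwards [hψ'] with y hy
  rw [show (∫ x, phi β ν (x, y.1) * phi β ν y ∂ν) = (∫ x, phi β ν (x, y.1) ∂ν) * phi β ν y
    from integral_mul_const _ _]
  have : (∫ x, phi β ν (x, y.1) ∂ν) = psi β ν y.1 := rfl
  rw [this, hy, zero_mul]
  simp

lemma integral_phi_disj (hβ : 0 ≤ β) (hφ2 : MemLp (phi β ν) 2 (ν.prod ν))
    (hψ : ∀ᵐ v ∂ν, psi β ν v = 0) :
    ∫ pq : (𝒳 × 𝒳) × 𝒳 × 𝒳, phi β ν pq.1 * phi β ν pq.2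
      ∂((ν.prod ν).prod (ν.prod ν)) = 0 := by
  rw [integral_prod_mul, integral_phi_zero hβ (hφ2.integrable one_le_two) hψ, zero_mul]

lemma integral_phi_sq_eq (hβ : 0 ≤ β) : True := trivial

end Core


end Stmt18Aux

open Stmt18Aux

/-- Let `β > 0` and `X` a random variable in a separable metric space.
Then `E[ĥ_X²] < ∞` iff (`ĥ_X` is integrable and `E[t̃_X²] < ∞`); and if these hold,
`(1/4)E[ĥ_X²] = E[t̃_X²]`, i.e. `hDC_β(X,X) = tDC_β(X,X)`. -/
theorem stmt18 {Ω : Type*} [MeasurableSpace Ω] (μ : Measure Ω) [IsProbabilityMeasure μ]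
    {𝒳 : Type*} [MetricSpace 𝒳] [TopologicalSpace.SeparableSpace 𝒳]
    [MeasurableSpace 𝒳] [BorelSpace 𝒳]
    (β : ℝ) (hβ : 0 < β)
    (X : Ω → 𝒳) (Xs : Fin 4 → Ω → 𝒳)
    (hXm : Measurable X) (hXsm : ∀ i, Measurable (Xs i))
    (hindep : iIndepFun Xs μ)
    (hid : ∀ i, IdentDistrib (Xs i) X μ μ) :
    (Integrable (fun ω => hHat β Xs ω ^ 2) μ ↔
      (Integrable (hHat β Xs) μ ∧ Integrable (fun ω => tTilde β μ Xs ω ^ 2) μ)) ∧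
    (Integrable (fun ω => hHat β Xs ω ^ 2) μ →
      (1 / 4 : ℝ) * ∫ ω, hHat β Xs ω ^ 2 ∂μ = ∫ ω, tTilde β μ Xs ω ^ 2 ∂μ) := by
  haveI : SecondCountableTopology 𝒳 := UniformSpace.secondCountable_of_separable 𝒳
  have hβ0 : (0:ℝ) ≤ β := hβ.le
  set ν : Measure 𝒳 := μ.map X with hν
  haveI : IsProbabilityMeasure ν := Measure.isProbabilityMeasure_map hXm.aemeasurable
  have hmapi : ∀ i, μ.map (Xs i) = ν := fun i => (hid i).map_eq
  -- joint laws
  have hpair : ∀ i j : Fin 4, i ≠ j → μ.map (fun ω => (Xs i ω, Xs j ω)) = ν.prod ν := by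
    intro i j hij
    rw [(indepFun_iff_map_prod_eq_prod_map_map (hXsm i).aemeasurable
      (hXsm j).aemeasurable).1 (hindep.indepFun hij), hmapi i, hmapi j]
  have htrip : ∀ a b c : Fin 4, b ≠ c → a ≠ b → a ≠ c →
      μ.map (fun ω => (Xs a ω, (Xs b ω, Xs c ω))) = ν.prod (ν.prod ν) := by
    intro a b c hbc hab hac
    have h1 : IndepFun (Xs a) (fun ω => (Xs b ω, Xs c ω)) μ :=
      (hindep.indepFun_prodMk hXsm b c a hab.symm hac.symm).symm
    rw [(indepFun_iff_map_prod_eq_prod_map_map (hXsm a).aemeasurable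
      ((hXsm b).prodMk (hXsm c)).aemeasurable).1 h1, hmapi a, hpair b c hbc]
  have hquad : ∀ a b c d : Fin 4, a ≠ b → c ≠ d → a ≠ c → a ≠ d → b ≠ c → b ≠ d →
      μ.map (fun ω => ((Xs a ω, Xs b ω), (Xs c ω, Xs d ω)))
        = (ν.prod ν).prod (ν.prod ν) := by
    intro a b c d hab hcd hac had hbc hbd
    have h1 : IndepFun (fun ω => (Xs a ω, Xs b ω)) (fun ω => (Xs c ω, Xs d ω)) μ :=
      hindep.indepFun_prodMk_prodMk hXsm a b c d hac had hbc hbd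
    rw [(indepFun_iff_map_prod_eq_prod_map_map
      ((hXsm a).prodMk (hXsm b)).aemeasurable
      ((hXsm c).prodMk (hXsm d)).aemeasurable).1 h1, hpair a b hab, hpair c d hcd]
  -- basic measurability
  have hp01m : Measurable (fun ω => (Xs 0 ω, Xs 1 ω)) := (hXsm 0).prodMk (hXsm 1)
  have hp23m : Measurable (fun ω => (Xs 2 ω, Xs 3 ω)) := (hXsm 2).prodMk (hXsm 3)
  have hq4m : Measurable (fun ω => ((Xs 0 ω, Xs 1 ω), (Xs 2 ω, Xs 3 ω))) :=
    hp01m.prodMk hp23m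
  have hq4map : μ.map (fun ω => ((Xs 0 ω, Xs 1 ω), (Xs 2 ω, Xs 3 ω)))
      = (ν.prod ν).prod (ν.prod ν) :=
    hquad 0 1 2 3 (by decide) (by decide) (by decide) (by decide) (by decide) (by decide)
  have hHfasm : ∀ m' : Measure ((𝒳 × 𝒳) × 𝒳 × 𝒳),
      AEStronglyMeasurable (fun pq : (𝒳 × 𝒳) × 𝒳 × 𝒳 => Hf β pq.1 pq.2) m' :=
    fun m' => (measurable_Hf hβ0).aestronglyMeasurable
  have hφm : Measurable (phi β ν) := (stronglyMeasurable_phi hβ0 ν).measurable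
  have hφasm : ∀ m' : Measure (𝒳 × 𝒳), AEStronglyMeasurable (phi β ν) m' :=
    fun m' => hφm.aestronglyMeasurable
  have hhm : Measurable (hHat β Xs) := by
    have := measurable_Hf_comp (𝒳 := 𝒳) hβ0 hp01m hp23m
    exact this
  -- the conditioning σ-algebra
  have hm : MeasurableSpace.comap (fun ω => (Xs 0 ω, Xs 1 ω)) inferInstance
      ≤ ‹MeasurableSpace Ω› := hp01m.comap_le
  have htTasm : AEStronglyMeasurable (tTilde β μ Xs) μ :=
    (stronglyMeasurable_condExp.mono hm).aestronglyMeasurable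
  -- transfer of integrability of hHat to the product space
  have mk_hHfInt : Integrable (hHat β Xs) μ → Integrable
      (fun pq : (𝒳 × 𝒳) × 𝒳 × 𝒳 => Hf β pq.1 pq.2) ((ν.prod ν).prod (ν.prod ν)) := by
    intro hL1
    rw [← hq4map, integrable_map_measure (by rw [hq4map]; exact hHfasm _) hq4m.aemeasurable]
    exact hL1
  -- MemLp transfer along a pair of coordinates
  have hmemPair : ∀ (i j : Fin 4), i ≠ j → MemLp (phi β ν) 2 (ν.prod ν) →
      MemLp (fun ω => phi β ν (Xs i ω, Xs j ω)) 2 μ := by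
    intro i j hij h
    have := (memLp_map_measure_iff (by rw [hpair i j hij]; exact hφasm _)
      ((hXsm i).prodMk (hXsm j)).aemeasurable).1 (by rw [hpair i j hij]; exact h)
    exact this
  -- tTilde is (a.e.) phi of the first pair
  have mk_htT : Integrable (hHat β Xs) μ →
      tTilde β μ Xs =ᵐ[μ] fun ω => phi β ν (Xs 0 ω, Xs 1 ω) := by
    intro hL1
    have hHfInt := mk_hHfInt hL1
    have hφInt : Integrable (phi β ν) (ν.prod ν) := hHfInt.integral_prod_left
    have hAInt : Integrable (fun ω => phi β ν (Xs 0 ω, Xs 1 ω)) μ := by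
      have := (integrable_map_measure (by rw [hpair 0 1 (by decide)]; exact hφasm _)
        hp01m.aemeasurable).1 (by rw [hpair 0 1 (by decide)]; exact hφInt)
      exact this
    have key : (fun ω => phi β ν (Xs 0 ω, Xs 1 ω)) =ᵐ[μ]
        μ[hHat β Xs | MeasurableSpace.comap (fun ω => (Xs 0 ω, Xs 1 ω)) inferInstance] := by
      refine ae_eq_condExp_of_forall_setIntegral_eq hm hL1
        (fun s _ _ => hAInt.integrableOn) ?_ ?_
      · intro s hs _
        obtain ⟨B, hB, rfl⟩ := hs
        have hL : ∫ p in B, phi β ν p ∂(ν.prod ν)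
            = ∫ ω in (fun ω => (Xs 0 ω, Xs 1 ω)) ⁻¹' B, phi β ν (Xs 0 ω, Xs 1 ω) ∂μ := by
          have h := setIntegral_map (μ := μ) (g := fun ω => (Xs 0 ω, Xs 1 ω)) hB
            (by rw [hpair 0 1 (by decide)]; exact hφasm _) hp01m.aemeasurable
          rw [hpair 0 1 (by decide)] at h
          exact h
        have hpre : (fun ω => (Xs 0 ω, Xs 1 ω)) ⁻¹' B
            = (fun ω => ((Xs 0 ω, Xs 1 ω), (Xs 2 ω, Xs 3 ω))) ⁻¹' (B ×ˢ Set.univ) := by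
          ext ω; simp
        have hR : ∫ pq in B ×ˢ Set.univ, Hf β pq.1 pq.2 ∂((ν.prod ν).prod (ν.prod ν))
            = ∫ ω in (fun ω => (Xs 0 ω, Xs 1 ω)) ⁻¹' B, hHat β Xs ω ∂μ := by
          rw [hpre]
          have h := setIntegral_map (μ := μ)
            (g := fun ω => ((Xs 0 ω, Xs 1 ω), (Xs 2 ω, Xs 3 ω)))
            (hB.prod MeasurableSet.univ) (by rw [hq4map]; exact hHfasm _) hq4m.aemeasurable
          rw [hq4map] at h
          exact h
        have hM : ∫ pq in B ×ˢ Set.univ, Hf β pq.1 pq.2 ∂((ν.prod ν).prod (ν.prod ν))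
            = ∫ p in B, phi β ν p ∂(ν.prod ν) := by
          rw [setIntegral_prod _ hHfInt.integrableOn]
          simp only [Measure.restrict_univ]
          rfl
        rw [← hL, ← hR, hM]
      · have hm01 : Measurable[MeasurableSpace.comap (fun ω => (Xs 0 ω, Xs 1 ω))
            inferInstance] (fun ω => (Xs 0 ω, Xs 1 ω)) := Measurable.of_comap_le le_rfl
        exact ((stronglyMeasurable_phi hβ0 ν).comp_measurable hm01).aestronglyMeasurable
    exact key.symm
  -- the key a.e. identity
  have mk_hkey : Integrable (hHat β Xs) μ → (hHat β Xs =ᵐ[μ]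
      fun ω => phi β ν (Xs 0 ω, Xs 1 ω) - phi β ν (Xs 1 ω, Xs 2 ω)
        + phi β ν (Xs 2 ω, Xs 3 ω) - phi β ν (Xs 3 ω, Xs 0 ω)) := by
    intro hL1
    have hHfInt := mk_hHfInt hL1
    have h := key_identity (ν := ν) hβ0 hHfInt
    have hset : MeasurableSet {pq : (𝒳 × 𝒳) × 𝒳 × 𝒳 |
        Hf β pq.1 pq.2 = phi β ν pq.1 - phi β ν (pq.1.2, pq.2.1) + phi β ν pq.2
          - phi β ν (pq.2.2, pq.1.1)} := by
      refine measurableSet_eq_fun (measurable_Hf hβ0) ?_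
      exact (((hφm.comp measurable_fst).sub
        (hφm.comp ((measurable_fst.snd).prodMk (measurable_snd.fst)))).add
        (hφm.comp measurable_snd)).sub
        (hφm.comp ((measurable_snd.snd).prodMk (measurable_fst.fst)))
    rw [← hq4map] at h
    have h2 := (ae_map_iff hq4m.aemeasurable hset).1 h
    filter_upwards [h2] with ω hω
    exact hω
  constructor
  · constructor
    · -- forward direction
      intro h2
      have hmem2 : MemLp (hHat β Xs) 2 μ :=
        (memLp_two_iff_integrable_sq hhm.aestronglyMeasurable).2 h2
      have hL1 : Integrable (hHat β Xs) μ := hmem2.integrable one_le_two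
      have hHf2 : MemLp (fun pq : (𝒳 × 𝒳) × 𝒳 × 𝒳 => Hf β pq.1 pq.2) 2
          ((ν.prod ν).prod (ν.prod ν)) := by
        rw [← hq4map]
        refine (memLp_map_measure_iff (by rw [hq4map]; exact hHfasm _)
          hq4m.aemeasurable).2 ?_
        exact hmem2
      have hφ2 : MemLp (phi β ν) 2 (ν.prod ν) := memL2_phi hβ0 hHf2
      have htT := mk_htT hL1
      have hA2 : MemLp (fun ω => phi β ν (Xs 0 ω, Xs 1 ω)) 2 μ :=
        hmemPair 0 1 (by decide) hφ2
      have htT2mem : MemLp (tTilde β μ Xs) 2 μ := (memLp_congr_ae htT).2 hA2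
      exact ⟨hL1, (memLp_two_iff_integrable_sq htTasm).1 htT2mem⟩
    · -- backward direction
      rintro ⟨hL1, hT2⟩
      have htT := mk_htT hL1
      have hkey := mk_hkey hL1
      have htTmem2 : MemLp (tTilde β μ Xs) 2 μ :=
        (memLp_two_iff_integrable_sq htTasm).2 hT2
      have hA2 : MemLp (fun ω => phi β ν (Xs 0 ω, Xs 1 ω)) 2 μ :=
        (memLp_congr_ae htT).1 htTmem2
      have hφ2 : MemLp (phi β ν) 2 (ν.prod ν) := by
        have := (memLp_map_measure_iff (g := phi β ν) (f := fun ω => (Xs 0 ω, Xs 1 ω))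
          (by rw [hpair 0 1 (by decide)]; exact hφasm _) hp01m.aemeasurable).2 hA2
        rw [hpair 0 1 (by decide)] at this
        exact this
      have hB2 : MemLp (fun ω => phi β ν (Xs 1 ω, Xs 2 ω)) 2 μ :=
        hmemPair 1 2 (by decide) hφ2
      have hC2 : MemLp (fun ω => phi β ν (Xs 2 ω, Xs 3 ω)) 2 μ :=
        hmemPair 2 3 (by decide) hφ2
      have hD2 : MemLp (fun ω => phi β ν (Xs 3 ω, Xs 0 ω)) 2 μ :=
        hmemPair 3 0 (by decide) hφ2
      have hFmem : MemLp (fun ω => phi β ν (Xs 0 ω, Xs 1 ω) - phi β ν (Xs 1 ω, Xs 2 ω)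
          + phi β ν (Xs 2 ω, Xs 3 ω) - phi β ν (Xs 3 ω, Xs 0 ω)) 2 μ :=
        ((hA2.sub hB2).add hC2).sub hD2
      have hhmem2 : MemLp (hHat β Xs) 2 μ := (memLp_congr_ae hkey).2 hFmem
      exact (memLp_two_iff_integrable_sq hhm.aestronglyMeasurable).1 hhmem2
  · -- the equality
    intro h2
    have hmem2 : MemLp (hHat β Xs) 2 μ :=
      (memLp_two_iff_integrable_sq hhm.aestronglyMeasurable).2 h2
    have hL1 : Integrable (hHat β Xs) μ := hmem2.integrable one_le_two
    have hHfInt := mk_hHfInt hL1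
    have hHf2 : MemLp (fun pq : (𝒳 × 𝒳) × 𝒳 × 𝒳 => Hf β pq.1 pq.2) 2
        ((ν.prod ν).prod (ν.prod ν)) := by
      rw [← hq4map]
      refine (memLp_map_measure_iff (by rw [hq4map]; exact hHfasm _)
        hq4m.aemeasurable).2 ?_
      exact hmem2
    have hφ2 : MemLp (phi β ν) 2 (ν.prod ν) := memL2_phi hβ0 hHf2
    have hψ : ∀ᵐ v ∂ν, psi β ν v = 0 := psi_ae_zero hβ0 hHfInt
    have htT := mk_htT hL1
    have hkey := mk_hkey hL1
    -- square integrals transfer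
    have hsqint : ∀ (i j : Fin 4), i ≠ j →
        ∫ ω, phi β ν (Xs i ω, Xs j ω) ^ 2 ∂μ = ∫ p, phi β ν p ^ 2 ∂(ν.prod ν) := by
      intro i j hij
      have h := integral_map (((hXsm i).prodMk (hXsm j)).aemeasurable)
        ((hφm.pow_const 2).aestronglyMeasurable
          (μ := μ.map (fun ω => (Xs i ω, Xs j ω))))
      rw [hpair i j hij] at h
      exact h.symm
    -- adjacent cross terms vanish
    have hadj : ∀ (a b c : Fin 4), a ≠ b → b ≠ c → a ≠ c →
        ∫ ω, phi β ν (Xs a ω, Xs b ω) * phi β ν (Xs b ω, Xs c ω) ∂μ = 0 := by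
      intro a b c hab hbc hac
      have hTm : Measurable (fun ω => (Xs a ω, (Xs b ω, Xs c ω))) :=
        (hXsm a).prodMk ((hXsm b).prodMk (hXsm c))
      have hfm : Measurable (fun x : 𝒳 × 𝒳 × 𝒳 => phi β ν (x.1, x.2.1) * phi β ν x.2) :=
        (hφm.comp (measurable_fst.prodMk (measurable_snd.fst))).mul
          (hφm.comp measurable_snd)
      have h := integral_map hTm.aemeasurable
        (hfm.aestronglyMeasurable (μ := μ.map (fun ω => (Xs a ω, (Xs b ω, Xs c ω)))))
      rw [htrip a b c hbc hab hac] at h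
      have h2 : ∫ ω, phi β ν (Xs a ω, Xs b ω) * phi β ν (Xs b ω, Xs c ω) ∂μ
          = ∫ x : 𝒳 × 𝒳 × 𝒳, phi β ν (x.1, x.2.1) * phi β ν x.2 ∂(ν.prod (ν.prod ν)) :=
        h.symm
      rw [h2]
      exact integral_phi_adj hβ0 hφ2 hψ
    -- disjoint cross terms vanish
    have hdisj : ∀ (a b c d : Fin 4), a ≠ b → c ≠ d → a ≠ c → a ≠ d → b ≠ c → b ≠ d →
        ∫ ω, phi β ν (Xs a ω, Xs b ω) * phi β ν (Xs c ω, Xs d ω) ∂μ = 0 := by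
      intro a b c d hab hcd hac had hbc hbd
      have hTm : Measurable (fun ω => ((Xs a ω, Xs b ω), (Xs c ω, Xs d ω))) :=
        ((hXsm a).prodMk (hXsm b)).prodMk ((hXsm c).prodMk (hXsm d))
      have hfm : Measurable (fun x : (𝒳 × 𝒳) × 𝒳 × 𝒳 => phi β ν x.1 * phi β ν x.2) :=
        (hφm.comp measurable_fst).mul (hφm.comp measurable_snd)
      have h := integral_map hTm.aemeasurable
        (hfm.aestronglyMeasurable
          (μ := μ.map (fun ω => ((Xs a ω, Xs b ω), (Xs c ω, Xs d ω)))))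
      rw [hquad a b c d hab hcd hac had hbc hbd] at h
      have h2 : ∫ ω, phi β ν (Xs a ω, Xs b ω) * phi β ν (Xs c ω, Xs d ω) ∂μ
          = ∫ x : (𝒳 × 𝒳) × 𝒳 × 𝒳, phi β ν x.1 * phi β ν x.2
            ∂((ν.prod ν).prod (ν.prod ν)) := h.symm
      rw [h2]
      exact integral_phi_disj hβ0 hφ2 hψ
    -- memLp of the four summands
    have hA2 : MemLp (fun ω => phi β ν (Xs 0 ω, Xs 1 ω)) 2 μ := hmemPair 0 1 (by decide) hφ2
    have hB2 : MemLp (fun ω => phi β ν (Xs 1 ω, Xs 2 ω)) 2 μ := hmemPair 1 2 (by decide) hφ2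
    have hC2 : MemLp (fun ω => phi β ν (Xs 2 ω, Xs 3 ω)) 2 μ := hmemPair 2 3 (by decide) hφ2
    have hD2 : MemLp (fun ω => phi β ν (Xs 3 ω, Xs 0 ω)) 2 μ := hmemPair 3 0 (by decide) hφ2
    -- integrability of squares and products
    have iA : Integrable (fun ω => phi β ν (Xs 0 ω, Xs 1 ω) ^ 2) μ :=
      (memLp_two_iff_integrable_sq hA2.1).1 hA2
    have iB : Integrable (fun ω => phi β ν (Xs 1 ω, Xs 2 ω) ^ 2) μ :=
      (memLp_two_iff_integrable_sq hB2.1).1 hB2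
    have iC : Integrable (fun ω => phi β ν (Xs 2 ω, Xs 3 ω) ^ 2) μ :=
      (memLp_two_iff_integrable_sq hC2.1).1 hC2
    have iD : Integrable (fun ω => phi β ν (Xs 3 ω, Xs 0 ω) ^ 2) μ :=
      (memLp_two_iff_integrable_sq hD2.1).1 hD2
    have iAC : Integrable (fun ω => phi β ν (Xs 0 ω, Xs 1 ω) * phi β ν (Xs 2 ω, Xs 3 ω)) μ :=
      integrable_mul_of_memL2 hA2 hC2
    have iBD : Integrable (fun ω => phi β ν (Xs 1 ω, Xs 2 ω) * phi β ν (Xs 3 ω, Xs 0 ω)) μ :=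
      integrable_mul_of_memL2 hB2 hD2
    have iAB : Integrable (fun ω => phi β ν (Xs 0 ω, Xs 1 ω) * phi β ν (Xs 1 ω, Xs 2 ω)) μ :=
      integrable_mul_of_memL2 hA2 hB2
    have iBC : Integrable (fun ω => phi β ν (Xs 1 ω, Xs 2 ω) * phi β ν (Xs 2 ω, Xs 3 ω)) μ :=
      integrable_mul_of_memL2 hB2 hC2
    have iCD : Integrable (fun ω => phi β ν (Xs 2 ω, Xs 3 ω) * phi β ν (Xs 3 ω, Xs 0 ω)) μ :=
      integrable_mul_of_memL2 hC2 hD2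
    have iDA : Integrable (fun ω => phi β ν (Xs 3 ω, Xs 0 ω) * phi β ν (Xs 0 ω, Xs 1 ω)) μ :=
      integrable_mul_of_memL2 hD2 hA2
    -- abbreviations for the grouped integrands
    have iS1a : Integrable (fun ω => phi β ν (Xs 0 ω, Xs 1 ω) ^ 2
        + phi β ν (Xs 1 ω, Xs 2 ω) ^ 2) μ := iA.add iB
    have iS1b : Integrable (fun ω => phi β ν (Xs 0 ω, Xs 1 ω) ^ 2
        + phi β ν (Xs 1 ω, Xs 2 ω) ^ 2 + phi β ν (Xs 2 ω, Xs 3 ω) ^ 2) μ := iS1a.add iC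
    have iS1 : Integrable (fun ω => phi β ν (Xs 0 ω, Xs 1 ω) ^ 2
        + phi β ν (Xs 1 ω, Xs 2 ω) ^ 2 + phi β ν (Xs 2 ω, Xs 3 ω) ^ 2
        + phi β ν (Xs 3 ω, Xs 0 ω) ^ 2) μ := iS1b.add iD
    have i2AC : Integrable (fun ω => 2 * (phi β ν (Xs 0 ω, Xs 1 ω)
        * phi β ν (Xs 2 ω, Xs 3 ω))) μ := iAC.const_mul 2
    have i2BD : Integrable (fun ω => 2 * (phi β ν (Xs 1 ω, Xs 2 ω)
        * phi β ν (Xs 3 ω, Xs 0 ω))) μ := iBD.const_mul 2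
    have iS2 : Integrable (fun ω => 2 * (phi β ν (Xs 0 ω, Xs 1 ω)
        * phi β ν (Xs 2 ω, Xs 3 ω)) + 2 * (phi β ν (Xs 1 ω, Xs 2 ω)
        * phi β ν (Xs 3 ω, Xs 0 ω))) μ := i2AC.add i2BD
    have i2AB : Integrable (fun ω => 2 * (phi β ν (Xs 0 ω, Xs 1 ω)
        * phi β ν (Xs 1 ω, Xs 2 ω))) μ := iAB.const_mul 2
    have i2BC : Integrable (fun ω => 2 * (phi β ν (Xs 1 ω, Xs 2 ω)
        * phi β ν (Xs 2 ω, Xs 3 ω))) μ := iBC.const_mul 2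
    have i2CD : Integrable (fun ω => 2 * (phi β ν (Xs 2 ω, Xs 3 ω)
        * phi β ν (Xs 3 ω, Xs 0 ω))) μ := iCD.const_mul 2
    have i2DA : Integrable (fun ω => 2 * (phi β ν (Xs 3 ω, Xs 0 ω)
        * phi β ν (Xs 0 ω, Xs 1 ω))) μ := iDA.const_mul 2
    have iS3a : Integrable (fun ω => 2 * (phi β ν (Xs 0 ω, Xs 1 ω)
        * phi β ν (Xs 1 ω, Xs 2 ω)) + 2 * (phi β ν (Xs 1 ω, Xs 2 ω)
        * phi β ν (Xs 2 ω, Xs 3 ω))) μ := i2AB.add i2BC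
    have iS3b : Integrable (fun ω => 2 * (phi β ν (Xs 0 ω, Xs 1 ω)
        * phi β ν (Xs 1 ω, Xs 2 ω)) + 2 * (phi β ν (Xs 1 ω, Xs 2 ω)
        * phi β ν (Xs 2 ω, Xs 3 ω)) + 2 * (phi β ν (Xs 2 ω, Xs 3 ω)
        * phi β ν (Xs 3 ω, Xs 0 ω))) μ := iS3a.add i2CD
    have iS3 : Integrable (fun ω => 2 * (phi β ν (Xs 0 ω, Xs 1 ω)
        * phi β ν (Xs 1 ω, Xs 2 ω)) + 2 * (phi β ν (Xs 1 ω, Xs 2 ω)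
        * phi β ν (Xs 2 ω, Xs 3 ω)) + 2 * (phi β ν (Xs 2 ω, Xs 3 ω)
        * phi β ν (Xs 3 ω, Xs 0 ω)) + 2 * (phi β ν (Xs 3 ω, Xs 0 ω)
        * phi β ν (Xs 0 ω, Xs 1 ω))) μ := iS3b.add i2DA
    have iS12 : Integrable (fun ω => (phi β ν (Xs 0 ω, Xs 1 ω) ^ 2
        + phi β ν (Xs 1 ω, Xs 2 ω) ^ 2 + phi β ν (Xs 2 ω, Xs 3 ω) ^ 2
        + phi β ν (Xs 3 ω, Xs 0 ω) ^ 2)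
        + (2 * (phi β ν (Xs 0 ω, Xs 1 ω) * phi β ν (Xs 2 ω, Xs 3 ω))
          + 2 * (phi β ν (Xs 1 ω, Xs 2 ω) * phi β ν (Xs 3 ω, Xs 0 ω)))) μ := iS1.add iS2
    -- the main computation
    have ehs : ∫ ω, hHat β Xs ω ^ 2 ∂μ = 4 * ∫ p, phi β ν p ^ 2 ∂(ν.prod ν) := by
      have e0 : ∫ ω, hHat β Xs ω ^ 2 ∂μ
          = ∫ ω, (phi β ν (Xs 0 ω, Xs 1 ω) - phi β ν (Xs 1 ω, Xs 2 ω)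
            + phi β ν (Xs 2 ω, Xs 3 ω) - phi β ν (Xs 3 ω, Xs 0 ω)) ^ 2 ∂μ :=
        integral_congr_ae (hkey.mono fun ω h => by beta_reduce; rw [h])
      have e1 : ∫ ω, (phi β ν (Xs 0 ω, Xs 1 ω) - phi β ν (Xs 1 ω, Xs 2 ω)
            + phi β ν (Xs 2 ω, Xs 3 ω) - phi β ν (Xs 3 ω, Xs 0 ω)) ^ 2 ∂μ
          = ∫ ω, ((phi β ν (Xs 0 ω, Xs 1 ω) ^ 2 + phi β ν (Xs 1 ω, Xs 2 ω) ^ 2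
              + phi β ν (Xs 2 ω, Xs 3 ω) ^ 2 + phi β ν (Xs 3 ω, Xs 0 ω) ^ 2)
            + (2 * (phi β ν (Xs 0 ω, Xs 1 ω) * phi β ν (Xs 2 ω, Xs 3 ω))
              + 2 * (phi β ν (Xs 1 ω, Xs 2 ω) * phi β ν (Xs 3 ω, Xs 0 ω)))
            - (2 * (phi β ν (Xs 0 ω, Xs 1 ω) * phi β ν (Xs 1 ω, Xs 2 ω))
              + 2 * (phi β ν (Xs 1 ω, Xs 2 ω) * phi β ν (Xs 2 ω, Xs 3 ω))
              + 2 * (phi β ν (Xs 2 ω, Xs 3 ω) * phi β ν (Xs 3 ω, Xs 0 ω))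
              + 2 * (phi β ν (Xs 3 ω, Xs 0 ω) * phi β ν (Xs 0 ω, Xs 1 ω)))) ∂μ :=
        integral_congr_ae (ae_of_all _ fun ω => by ring)
      rw [e0, e1, integral_sub iS12 iS3, integral_add iS1 iS2,
        integral_add iS1b iD, integral_add iS1a iC, integral_add iA iB,
        integral_add i2AC i2BD, integral_add iS3b i2DA, integral_add iS3a i2CD,
        integral_add i2AB i2BC,
        integral_const_mul 2, integral_const_mul 2, integral_const_mul 2,
        integral_const_mul 2, integral_const_mul 2, integral_const_mul 2,
        hsqint 0 1 (by decide), hsqint 1 2 (by decide), hsqint 2 3 (by decide),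
        hsqint 3 0 (by decide),
        hdisj 0 1 2 3 (by decide) (by decide) (by decide) (by decide) (by decide) (by decide),
        hdisj 1 2 3 0 (by decide) (by decide) (by decide) (by decide) (by decide) (by decide),
        hadj 0 1 2 (by decide) (by decide) (by decide),
        hadj 1 2 3 (by decide) (by decide) (by decide),
        hadj 2 3 0 (by decide) (by decide) (by decide),
        hadj 3 0 1 (by decide) (by decide) (by decide)]
      ring
    have ets : ∫ ω, tTilde β μ Xs ω ^ 2 ∂μ = ∫ p, phi β ν p ^ 2 ∂(ν.prod ν) := by
      have e0 : ∫ ω, tTilde β μ Xs ω ^ 2 ∂μ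
          = ∫ ω, phi β ν (Xs 0 ω, Xs 1 ω) ^ 2 ∂μ :=
        integral_congr_ae (htT.mono fun ω h => by beta_reduce; rw [h])
      rw [e0, hsqint 0 1 (by decide)]
    rw [ehs, ets]
    ring
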